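/- Let X be a Banach space that is the direct sum of finitely many closed subspaces X₁,...,Xₙ (with norm equivalent to the ℓ¹-sum of the coordinate norms). If every infinite-dimensional closed subspace of each Xⱼ contains an isomorphic copy of ℓ^p, then every infinite-dimensional closed subspace of X contains an isomorphic copy of ℓ^p. -/

import Mathlib

open Set

/-- The subspace (given as a set) `E` of `Y` contains an isomorphic copy of `ℓ^p`:
there is a bounded linear map from `ℓ^p` into `Y` which is bounded below (an isomorphic
embedding) and whose range lies in `E`. -/
def ContainsLpIn (p : ENNReal) [Fact (1 ≤ p)] {Y : Type*} [NormedAddCommGroup Y]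
    [NormedSpace ℝ Y] (E : Set Y) : Prop :=
  ∃ T : lp (fun _ : ℕ => ℝ) p →L[ℝ] Y,
    (∃ c > 0, ∀ v, c * ‖v‖ ≤ ‖T v‖) ∧ Set.range T ⊆ E

/-- `Y` is `ℓ^p`-saturated: every infinite-dimensional closed subspace of `Y`
contains an isomorphic copy of `ℓ^p`. -/
def LpSaturated (p : ENNReal) [Fact (1 ≤ p)] (Y : Type*) [NormedAddCommGroup Y]
    [NormedSpace ℝ Y] : Prop :=
  ∀ E : Submodule ℝ Y, IsClosed (E : Set Y) → ¬ FiniteDimensional ℝ E →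
    ContainsLpIn p (E : Set Y)


section Aux

variable {Y : Type*} [NormedAddCommGroup Y] [NormedSpace ℝ Y]

lemma aux_exists_ne_zero (F : Submodule ℝ Y) (hF : ¬ FiniteDimensional ℝ F) :
    ∃ x ∈ F, x ≠ 0 := by
  by_contra hc
  push_neg at hc
  apply hF
  have : F = ⊥ := by
    apply le_bot_iff.mp
    intro x hx
    simpa using hc x hx
  rw [this]
  infer_instance

lemma aux_inf_ker (F : Submodule ℝ Y) (hF : ¬ FiniteDimensional ℝ F) (f : Y →L[ℝ] ℝ) :
    ¬ FiniteDimensional ℝ ↥(F ⊓ LinearMap.ker (f : Y →ₗ[ℝ] ℝ)) := by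
  intro hfin
  apply hF
  by_cases hv : ∃ v ∈ F, f v ≠ 0
  · obtain ⟨v, hvF, hfv⟩ := hv
    have hle : F ≤ (F ⊓ LinearMap.ker (f : Y →ₗ[ℝ] ℝ)) ⊔ Submodule.span ℝ {v} := by
      intro x hx
      have hx1 : x - (f x / f v) • v ∈ F ⊓ LinearMap.ker (f : Y →ₗ[ℝ] ℝ) := by
        refine ⟨F.sub_mem hx (F.smul_mem _ hvF), ?_⟩
        have : f (x - (f x / f v) • v) = 0 := by
          rw [map_sub, map_smul, smul_eq_mul, div_mul_cancel₀ _ hfv, sub_self]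
        simpa [LinearMap.mem_ker] using this
      have hx2 : (f x / f v) • v ∈ Submodule.span ℝ ({v} : Set Y) :=
        Submodule.smul_mem _ _ (Submodule.mem_span_singleton_self v)
      have : x = (x - (f x / f v) • v) + (f x / f v) • v := by abel
      rw [this]
      exact Submodule.add_mem_sup hx1 hx2
    haveI := hfin
    exact Submodule.finiteDimensional_of_le hle
  · push_neg at hv
    have hle : F ≤ F ⊓ LinearMap.ker (f : Y →ₗ[ℝ] ℝ) :=
      le_inf le_rfl (fun x hx => by simpa [LinearMap.mem_ker] using hv x hx)
    haveI := hfin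
    exact Submodule.finiteDimensional_of_le hle

end Aux

section Key

variable {Y Z : Type*} [NormedAddCommGroup Y] [NormedSpace ℝ Y]
  [NormedAddCommGroup Z] [NormedSpace ℝ Z]

lemma key_dichotomy (S : Y →L[ℝ] Z) (G : Submodule ℝ Y) (hGc : IsClosed (G : Set Y))
    (hGd : ¬ FiniteDimensional ℝ G) {ε : ℝ} (hε : 0 < ε) :
    (∃ F : Submodule ℝ Y, F ≤ G ∧ IsClosed (F : Set Y) ∧ ¬ FiniteDimensional ℝ F ∧
      ∃ c > 0, ∀ x ∈ F, c * ‖x‖ ≤ ‖S x‖) ∨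
    (∃ F : Submodule ℝ Y, F ≤ G ∧ IsClosed (F : Set Y) ∧ ¬ FiniteDimensional ℝ F ∧
      ∀ x ∈ F, ‖S x‖ ≤ ε * ‖x‖) := by
  classical
  by_cases hbb : ∃ F : Submodule ℝ Y, F ≤ G ∧ IsClosed (F : Set Y) ∧ ¬ FiniteDimensional ℝ F ∧
      ∃ c > 0, ∀ x ∈ F, c * ‖x‖ ≤ ‖S x‖
  · exact Or.inl hbb
  right
  push_neg at hbb
  -- normalized picker
  have hpick : ∀ F : Submodule ℝ Y, F ≤ G → IsClosed (F : Set Y) → ¬ FiniteDimensional ℝ F →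
      ∀ c : ℝ, 0 < c → ∃ x : Y, x ∈ F ∧ ‖x‖ = 1 ∧ ‖S x‖ ≤ c := by
    intro F h1 h2 h3 c hc
    obtain ⟨x, hxF, hx⟩ := hbb F h1 h2 h3 c hc
    have hx0 : x ≠ 0 := by
      rintro rfl
      simp at hx
    have hxn : (0:ℝ) < ‖x‖ := norm_pos_iff.mpr hx0
    refine ⟨‖x‖⁻¹ • x, F.smul_mem _ hxF, ?_, ?_⟩
    · rw [norm_smul, norm_inv, norm_norm, inv_mul_cancel₀ hxn.ne']
    · rw [map_smul, norm_smul, norm_inv, norm_norm]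
      rw [inv_mul_le_iff₀ hxn]
      exact (hx.le.trans (by ring_nf; exact le_rfl))
  -- dual vector chooser
  have hdual : ∀ x : Y, ∃ g : Y →L[ℝ] ℝ, ‖g‖ ≤ 1 ∧ g x = ‖x‖ := fun x =>
    exists_dual_vector'' ℝ x
  choose dual hdual1 hdual2 using hdual
  set δ : ℕ → ℝ := fun m => ε / 2 * (1 / 4) ^ m with hδdef
  have hδ : ∀ m, 0 < δ m := fun m => by positivity
  -- the subtype of admissible subspaces
  let P : Type _ := {F : Submodule ℝ Y // F ≤ G ∧ IsClosed (F : Set Y) ∧ ¬ FiniteDimensional ℝ F}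
  have hstepP : ∀ (m : ℕ) (Fp : P), ∃ q : P × Y, q.1.1 ≤ Fp.1 ∧ q.2 ∈ Fp.1 ∧ ‖q.2‖ = 1 ∧
      ‖S q.2‖ ≤ δ m ∧ ∀ z ∈ q.1.1, dual q.2 z = 0 := by
    intro m Fp
    obtain ⟨x, hxF, hxn, hxS⟩ := hpick Fp.1 Fp.2.1 Fp.2.2.1 Fp.2.2.2 (δ m) (hδ m)
    refine ⟨(⟨Fp.1 ⊓ LinearMap.ker (dual x : Y →ₗ[ℝ] ℝ), ?_, ?_, ?_⟩, x), inf_le_left, hxF, hxn, hxS, ?_⟩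
    · exact inf_le_left.trans Fp.2.1
    · exact Fp.2.2.1.inter (ContinuousLinearMap.isClosed_ker (dual x))
    · exact aux_inf_ker Fp.1 Fp.2.2.2 (dual x)
    · intro z hz
      simpa [LinearMap.mem_ker] using hz.2
  choose step hstep1 hstep2 hstep3 hstep4 hstep5 using hstepP
  let G0 : P := ⟨G, le_rfl, hGc, hGd⟩
  let chain : ℕ → P := fun m => Nat.rec G0 (fun k Fp => (step k Fp).1) m
  let x : ℕ → Y := fun m => (step m (chain m)).2
  have hchainS : ∀ m, chain (m + 1) = (step m (chain m)).1 := fun m => rfl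
  have hxmem : ∀ m, x m ∈ (chain m).1 := fun m => hstep2 m (chain m)
  have hxnorm : ∀ m, ‖x m‖ = 1 := fun m => hstep3 m (chain m)
  have hxS : ∀ m, ‖S (x m)‖ ≤ δ m := fun m => hstep4 m (chain m)
  have hmono' : ∀ m, (chain (m + 1)).1 ≤ (chain m).1 := fun m => by
    rw [hchainS m]; exact hstep1 m (chain m)
  have hmono : ∀ k m, k ≤ m → (chain m).1 ≤ (chain k).1 := by
    intro k m hkm
    induction hkm with
    | refl => exact le_rfl
    | step h ih => exact (hmono' _).trans ih
  set g : ℕ → Y →L[ℝ] ℝ := fun m => dual (x m) with hgdef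
  have hgx : ∀ m, g m (x m) = 1 := fun m => by rw [hgdef]; simp [hdual2, hxnorm m]
  have hgn : ∀ m, ‖g m‖ ≤ 1 := fun m => hdual1 (x m)
  have hg0 : ∀ k m, k < m → g k (x m) = 0 := by
    intro k m hkm
    have h1 : x m ∈ (chain (k + 1)).1 := hmono (k + 1) m hkm (hxmem m)
    have h2 : (chain (k + 1)).1 = (step k (chain k)).1.1 := congrArg _ (hchainS k)
    exact hstep5 k (chain k) (x m) (h2 ▸ h1)
  -- coefficient bound
  have hcoef : ∀ (N : ℕ) (a : ℕ → ℝ) (y : Y), (∑ k ∈ Finset.range N, a k • x k) = y →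
      ∀ j, j < N → |a j| ≤ 2 ^ j * ‖y‖ := by
    intro N a y hy j
    induction j using Nat.strong_induction_on with
    | _ j ih =>
      intro hjN
      have h1 : g j y = ∑ k ∈ Finset.range N, a k * g j (x k) := by
        rw [← hy, map_sum]
        exact Finset.sum_congr rfl (fun k _ => by rw [map_smul]; rfl)
      have h2 : ∑ k ∈ Finset.range N, a k * g j (x k)
          = ∑ k ∈ Finset.range (j + 1), a k * g j (x k) := by
        refine (Finset.sum_subset (Finset.range_subset_range.mpr hjN) ?_).symm
        intro k hk hk'
        have hjk : j < k := by
          simp only [Finset.mem_range, not_lt] at hk'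
          exact hk'
        rw [hg0 j k hjk, mul_zero]
      have h3 : ∑ k ∈ Finset.range (j + 1), a k * g j (x k)
          = (∑ k ∈ Finset.range j, a k * g j (x k)) + a j := by
        rw [Finset.sum_range_succ, hgx j, mul_one]
      have haj : a j = g j y - ∑ k ∈ Finset.range j, a k * g j (x k) := by
        rw [h1, h2, h3]; ring
      have hb1 : |g j y| ≤ ‖y‖ := by
        calc |g j y| = ‖g j y‖ := (Real.norm_eq_abs _).symm
          _ ≤ ‖g j‖ * ‖y‖ := (g j).le_opNorm y
          _ ≤ 1 * ‖y‖ := by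
              exact mul_le_mul_of_nonneg_right (hgn j) (norm_nonneg y)
          _ = ‖y‖ := one_mul _
      have hb2 : ∀ k, k < j → |a k * g j (x k)| ≤ 2 ^ k * ‖y‖ := by
        intro k hkj
        have h4 : |g j (x k)| ≤ 1 := by
          calc |g j (x k)| = ‖g j (x k)‖ := (Real.norm_eq_abs _).symm
            _ ≤ ‖g j‖ * ‖x k‖ := (g j).le_opNorm (x k)
            _ ≤ 1 * 1 := by
                exact mul_le_mul (hgn j) (le_of_eq (hxnorm k)) (norm_nonneg _) zero_le_one
            _ = 1 := one_mul _
        calc |a k * g j (x k)| = |a k| * |g j (x k)| := abs_mul _ _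
          _ ≤ (2 ^ k * ‖y‖) * 1 :=
              mul_le_mul (ih k hkj (hkj.trans hjN)) h4 (abs_nonneg _) (by positivity)
          _ = 2 ^ k * ‖y‖ := mul_one _
      calc |a j| ≤ |g j y| + |∑ k ∈ Finset.range j, a k * g j (x k)| := by
            rw [haj, sub_eq_add_neg]
            exact (abs_add_le _ _).trans (by rw [abs_neg])
        _ ≤ ‖y‖ + ∑ k ∈ Finset.range j, (2 ^ k * ‖y‖) :=
            add_le_add hb1 ((Finset.abs_sum_le_sum_abs _ _).trans
              (Finset.sum_le_sum fun k hk => hb2 k (Finset.mem_range.mp hk)))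
        _ = ‖y‖ + (2 ^ j - 1) * ‖y‖ := by
            rw [← Finset.sum_mul, geom_sum_eq (by norm_num : (2:ℝ) ≠ 1)]
            norm_num
        _ = 2 ^ j * ‖y‖ := by ring
  -- the span estimate
  have hspan : ∀ y ∈ Submodule.span ℝ (Set.range x), ‖S y‖ ≤ ε * ‖y‖ := by
    intro y hy
    rw [Finsupp.mem_span_range_iff_exists_finsupp] at hy
    obtain ⟨cc, hcc⟩ := hy
    set N : ℕ := (cc.support.sup id) + 1 with hN
    have hsub : cc.support ⊆ Finset.range N := fun k hk =>
      Finset.mem_range.mpr (Nat.lt_succ_of_le (Finset.le_sup (f := id) hk))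
    have hrep : ∑ k ∈ Finset.range N, cc k • x k = y := by
      rw [← hcc]
      exact (Finsupp.sum_of_support_subset cc hsub (fun i a => a • x i) (fun i _ => zero_smul ℝ (x i))).symm
    have hb := hcoef N (fun k => cc k) y hrep
    have hterm : ∀ k ∈ Finset.range N, ‖cc k • S (x k)‖ ≤ (ε / 2 * ‖y‖) * (1/2 : ℝ) ^ k := by
      intro k hk
      rw [norm_smul, Real.norm_eq_abs]
      calc |cc k| * ‖S (x k)‖ ≤ (2 ^ k * ‖y‖) * (ε / 2 * (1/4) ^ k) :=
            mul_le_mul (hb k (Finset.mem_range.mp hk)) (hxS k) (norm_nonneg _) (by positivity)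
        _ = (ε / 2 * ‖y‖) * ((2 * (1/4 : ℝ)) ^ k) := by rw [mul_pow]; ring
        _ = (ε / 2 * ‖y‖) * (1/2 : ℝ) ^ k := by norm_num
    calc ‖S y‖ = ‖∑ k ∈ Finset.range N, cc k • S (x k)‖ := by
          rw [← hrep]
          congr 1
          rw [map_sum]
          exact Finset.sum_congr rfl (fun k _ => by rw [map_smul])
      _ ≤ ∑ k ∈ Finset.range N, ‖cc k • S (x k)‖ := norm_sum_le _ _
      _ ≤ ∑ k ∈ Finset.range N, (ε / 2 * ‖y‖) * (1/2 : ℝ) ^ k := Finset.sum_le_sum hterm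
      _ = (ε / 2 * ‖y‖) * ∑ k ∈ Finset.range N, (1/2 : ℝ) ^ k := by rw [Finset.mul_sum]
      _ ≤ (ε / 2 * ‖y‖) * 2 := by
          apply mul_le_mul_of_nonneg_left _ (by positivity)
          rw [geom_sum_eq (by norm_num : (1/2 : ℝ) ≠ 1)]
          have h : (0:ℝ) ≤ (1/2:ℝ)^N := by positivity
          have h2 : ((1/2:ℝ)^N - 1)/((1/2:ℝ) - 1) = 2 - 2*(1/2:ℝ)^N := by ring
          rw [h2]; linarith
      _ = ε * ‖y‖ := by ring
  refine ⟨(Submodule.span ℝ (Set.range x)).topologicalClosure, ?_,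
    Submodule.isClosed_topologicalClosure _, ?_, ?_⟩
  · exact Submodule.topologicalClosure_minimal _ (Submodule.span_le.mpr (by
      rintro _ ⟨m, rfl⟩
      exact (chain m).2.1 (hxmem m))) hGc
  · intro hfin
    have hli : LinearIndependent ℝ x := by
      rw [linearIndependent_iff']
      intro s gg hsum i hi
      set a : ℕ → ℝ := fun k => if k ∈ s then gg k else 0 with ha
      set N : ℕ := (s.sup id) + 1 with hN
      have hsub : s ⊆ Finset.range N := fun k hk =>
        Finset.mem_range.mpr (Nat.lt_succ_of_le (Finset.le_sup (f := id) hk))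
      have hrep : ∑ k ∈ Finset.range N, a k • x k = 0 := by
        have h1 : ∑ k ∈ Finset.range N, a k • x k = ∑ k ∈ s, a k • x k :=
          (Finset.sum_subset hsub (fun k _ hks => by simp [ha, hks])).symm
        rw [h1, ← hsum]
        exact Finset.sum_congr rfl (fun k hk => by simp [ha, hk])
      have hizero := hcoef N a 0 hrep i (Finset.mem_range.mp (hsub hi))
      simp only [norm_zero, mul_zero] at hizero
      have h0 : a i = 0 := abs_nonpos_iff.mp hizero
      simpa [ha, hi] using h0
    haveI := hfin
    have hmem : ∀ m, x m ∈ (Submodule.span ℝ (Set.range x)).topologicalClosure := fun m =>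
      Submodule.le_topologicalClosure _ (Submodule.subset_span (Set.mem_range_self m))
    have hli' : LinearIndependent ℝ
        (fun m : ℕ => (⟨x m, hmem m⟩ : (Submodule.span ℝ (Set.range x)).topologicalClosure)) :=
      LinearIndependent.of_comp ((Submodule.span ℝ (Set.range x)).topologicalClosure).subtype
        (by exact hli)
    exact Module.Finite.not_linearIndependent_of_infinite _ hli'
  · intro y hy
    have hsubset : (Submodule.span ℝ (Set.range x) : Set Y) ⊆ {z : Y | ‖S z‖ ≤ ε * ‖z‖} :=
      fun z hz => hspan z hz
    have hcl : IsClosed {z : Y | ‖S z‖ ≤ ε * ‖z‖} :=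
      isClosed_le (S.continuous.norm) (continuous_const.mul continuous_norm)
    have hmin := closure_minimal hsubset hcl
    have hy' : y ∈ closure (Submodule.span ℝ (Set.range x) : Set Y) := by
      rw [← Submodule.topologicalClosure_coe]; exact hy
    exact hmin hy'

end Key

/-- A finite direct sum (with norm equivalent to the ℓ¹-sum of coordinate norms) of
`ℓ^p`-saturated Banach spaces is `ℓ^p`-saturated. -/
theorem lpSaturated_finite_sum (p : ENNReal) [Fact (1 ≤ p)] (hp : p ≠ ⊤)
    (n : ℕ) (X : Fin n → Type*) [∀ j, NormedAddCommGroup (X j)]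
    [∀ j, NormedSpace ℝ (X j)] [∀ j, CompleteSpace (X j)]
    (h : ∀ j, LpSaturated p (X j)) :
    LpSaturated p (Π j, X j) := by
  intro E hEc hEd
  have main : ∀ k : ℕ, k ≤ n →
      (∃ (j : Fin n) (F : Submodule ℝ (Π i, X i)), F ≤ E ∧ IsClosed (F : Set (Π i, X i)) ∧
        ¬ FiniteDimensional ℝ F ∧
        ∃ c > 0, ∀ x ∈ F, c * ‖x‖ ≤ ‖(ContinuousLinearMap.proj (R := ℝ) (φ := X) j) x‖) ∨
      (∃ F : Submodule ℝ (Π i, X i), F ≤ E ∧ IsClosed (F : Set (Π i, X i)) ∧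
        ¬ FiniteDimensional ℝ F ∧
        ∀ x ∈ F, ∀ j : Fin n, (j : ℕ) < k → ‖x j‖ ≤ 2⁻¹ * ‖x‖) := by
    intro k
    induction k with
    | zero =>
      intro _
      exact Or.inr ⟨E, le_rfl, hEc, hEd, fun x _ j hj => absurd hj (Nat.not_lt_zero _)⟩
    | succ k ih =>
      intro hk
      rcases ih (Nat.le_of_succ_le hk) with hL | ⟨F, hFE, hFc, hFd, hsmall⟩
      · exact Or.inl hL
      · have hkn : k < n := hk
        rcases key_dichotomy (ContinuousLinearMap.proj (R := ℝ) (φ := X) ⟨k, hkn⟩) F hFc hFd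
            (by norm_num : (0:ℝ) < 2⁻¹) with
          ⟨F', h1, h2, h3, c, hc, hb⟩ | ⟨F', h1, h2, h3, hsm⟩
        · exact Or.inl ⟨⟨k, hkn⟩, F', h1.trans hFE, h2, h3, c, hc, hb⟩
        · refine Or.inr ⟨F', h1.trans hFE, h2, h3, fun x hx j hj => ?_⟩
          rcases Nat.lt_succ_iff_lt_or_eq.mp hj with hj' | hj'
          · exact hsmall x (h1 hx) j hj'
          · have hjk : j = ⟨k, hkn⟩ := Fin.ext hj'
            subst hjk
            simpa [ContinuousLinearMap.proj_apply] using hsm x hx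
  rcases main n le_rfl with ⟨j, F, hFE, hFc, hFd, c, hc, hb⟩ | ⟨F, hFE, hFc, hFd, hsm⟩
  · haveI hFcomp : CompleteSpace F := hFc.completeSpace_coe
    set Lc : F →L[ℝ] X j :=
      (ContinuousLinearMap.proj (R := ℝ) (φ := X) j).comp F.subtypeL with hLcdef
    have hLb : ∀ z : F, c * ‖z‖ ≤ ‖Lc z‖ := fun z => by
      exact hb (z : Π i, X i) z.2
    have hupper : ∀ z : F, ‖Lc z‖ ≤ ‖z‖ := fun z => norm_le_pi_norm (z : Π i, X i) j
    have hcinv : (0:ℝ) ≤ c⁻¹ := (inv_pos.mpr hc).le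
    have hanti : AntilipschitzWith (Real.toNNReal c⁻¹) Lc := by
      apply ContinuousLinearMap.antilipschitz_of_bound
      intro z
      rw [Real.coe_toNNReal _ hcinv]
      calc ‖z‖ = c⁻¹ * (c * ‖z‖) := by field_simp
        _ ≤ c⁻¹ * ‖Lc z‖ := mul_le_mul_of_nonneg_left (hLb z) hcinv
    have hinj : Function.Injective Lc := hanti.injective
    have hinj' : Function.Injective (Lc : F →ₗ[ℝ] X j) := hinj
    set A : Submodule ℝ (X j) := LinearMap.range (Lc : F →ₗ[ℝ] X j) with hAdef
    have hAc : IsClosed (A : Set (X j)) := by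
      have hset : (A : Set (X j)) = Set.range Lc := by
        ext w
        simp [hAdef, LinearMap.mem_range, Set.mem_range]
      rw [hset]
      exact hanti.isClosed_range Lc.uniformContinuous
    set ψ := LinearEquiv.ofInjective (Lc : F →ₗ[ℝ] X j) hinj' with hψdef
    have hAd : ¬ FiniteDimensional ℝ A := by
      intro hfin
      haveI := hfin
      exact hFd (Module.Finite.equiv ψ.symm)
    obtain ⟨T0, ⟨c0, hc0, hT0⟩, hT0r⟩ := h j A hAc hAd
    have hψsymm_apply : ∀ w : A, Lc (ψ.symm w) = (w : X j) := by
      intro w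
      calc Lc (ψ.symm w) = ((ψ (ψ.symm w) : A) : X j) := by
            rw [hψdef, LinearEquiv.ofInjective_apply]; rfl
        _ = (w : X j) := by rw [ψ.apply_symm_apply]
    have hinvb : ∀ w : A, ‖(ψ.symm w : F)‖ ≤ c⁻¹ * ‖w‖ := by
      intro w
      have h1 := hLb (ψ.symm w)
      rw [hψsymm_apply w] at h1
      calc ‖(ψ.symm w : F)‖ = c⁻¹ * (c * ‖(ψ.symm w : F)‖) := by field_simp
        _ ≤ c⁻¹ * ‖(w : X j)‖ := mul_le_mul_of_nonneg_left h1 hcinv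
        _ = c⁻¹ * ‖w‖ := rfl
    set invc : A →L[ℝ] F :=
      LinearMap.mkContinuous (ψ.symm : A →ₗ[ℝ] F) c⁻¹ (fun w => hinvb w) with hinvcdef
    set T1 : lp (fun _ : ℕ => ℝ) p →L[ℝ] A :=
      T0.codRestrict A (fun v => hT0r (Set.mem_range_self v)) with hT1def
    refine ⟨F.subtypeL.comp (invc.comp T1), ⟨c0, hc0, fun v => ?_⟩, ?_⟩
    · have e2 : ‖(T1 v : X j)‖ ≤ ‖invc (T1 v)‖ := by
        have he : Lc (ψ.symm (T1 v)) = (T1 v : X j) := hψsymm_apply _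
        calc ‖(T1 v : X j)‖ = ‖Lc (ψ.symm (T1 v))‖ := by rw [he]
          _ ≤ ‖(ψ.symm (T1 v) : F)‖ := hupper _
          _ = ‖invc (T1 v)‖ := rfl
      have e3 : (T1 v : X j) = T0 v := rfl
      calc c0 * ‖v‖ ≤ ‖T0 v‖ := hT0 v
        _ = ‖(T1 v : X j)‖ := by rw [e3]
        _ ≤ ‖invc (T1 v)‖ := e2
        _ = ‖F.subtypeL.comp (invc.comp T1) v‖ := rfl
    · rintro _ ⟨v, rfl⟩
      exact hFE (invc (T1 v)).2
  · exfalso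
    obtain ⟨x, hxF, hx0⟩ := aux_exists_ne_zero F hFd
    have hle : ‖x‖ ≤ 2⁻¹ * ‖x‖ := by
      apply (pi_norm_le_iff_of_nonneg (by positivity)).mpr
      intro i
      exact hsm x hxF i i.isLt
    have hpos : (0:ℝ) < ‖x‖ := norm_pos_iff.mpr hx0
    linarith
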